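/- Let d, n ≥ 1 and σ > 0. Suppose q_i, p_i : I → ℝ^d (i = 1,…,n) are differentiable on an open interval I ⊆ ℝ and satisfy the landmark Hamiltonian equations q_i'(t) = ∑_{j=1}^n exp(−‖q_i(t) − q_j(t)‖²/(2σ²)) p_j(t) and p_i'(t) = (1/σ²) ∑_{j=1}^n exp(−‖q_i(t) − q_j(t)‖²/(2σ²)) ⟨p_i(t), p_j(t)⟩ (q_i(t) − q_j(t)). Then the angular momentum matrix μ_A(t) = ∑_{i=1}^n ( p_i(t) q_i(t)ᵀ − q_i(t) p_i(t)ᵀ ), i.e. the d×d matrix with entries ∑_i (p_i(t)_a q_i(t)_b − q_i(t)_a p_i(t)_b), is constant on I. -/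

import Mathlib

open Matrix

/-- Conservation of the angular momentum matrix `μ_A = ∑ᵢ (pᵢ qᵢᵀ − qᵢ pᵢᵀ)` along the
Hamiltonian flow of the landmark Hamiltonian
`H(q,p) = (1/2) ∑_{i,j} exp(−‖q_i − q_j‖²/(2σ²)) ⟨p_i, p_j⟩`. -/
theorem angular_momentum_conserved {d n : ℕ} (hd : 1 ≤ d) (hn : 1 ≤ n)
    (σ : ℝ) (hσ : 0 < σ) (a b : ℝ)
    (q p : Fin n → ℝ → (Fin d → ℝ))
    (hq : ∀ t ∈ Set.Ioo a b, ∀ i, HasDerivAt (q i)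
      (∑ j, Real.exp (-((q i t - q j t) ⬝ᵥ (q i t - q j t)) / (2 * σ ^ 2)) • p j t) t)
    (hp : ∀ t ∈ Set.Ioo a b, ∀ i, HasDerivAt (p i)
      ((1 / σ ^ 2) • ∑ j,
        (Real.exp (-((q i t - q j t) ⬝ᵥ (q i t - q j t)) / (2 * σ ^ 2))
          * (p i t ⬝ᵥ p j t)) • (q i t - q j t)) t) :
    ∀ t ∈ Set.Ioo a b, ∀ s ∈ Set.Ioo a b,
      (∑ i, (vecMulVec (p i t) (q i t) - vecMulVec (q i t) (p i t)))
        = ∑ i, (vecMulVec (p i s) (q i s) - vecMulVec (q i s) (p i s)) := by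
  intro t ht s hs
  ext α β
  simp only [Matrix.sum_apply, Matrix.sub_apply, Matrix.vecMulVec_apply]
  set F : ℝ → ℝ := fun u => ∑ i, (p i u α * q i u β - q i u α * p i u β) with hF
  -- derivative of F is 0 on Ioo a b
  have key : ∀ u ∈ Set.Ioo a b, HasDerivAt F 0 u := by
    intro u hu
    -- component derivatives
    have hqc : ∀ i γ, HasDerivAt (fun v => q i v γ)
        (∑ j, Real.exp (-((q i u - q j u) ⬝ᵥ (q i u - q j u)) / (2 * σ ^ 2)) * p j u γ) u := by
      intro i γ
      have := (hasDerivAt_pi.1 (hq u hu i)) γ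
      simpa [Finset.sum_apply] using this
    have hpc : ∀ i γ, HasDerivAt (fun v => p i v γ)
        ((1 / σ ^ 2) * ∑ j, Real.exp (-((q i u - q j u) ⬝ᵥ (q i u - q j u)) / (2 * σ ^ 2))
          * (p i u ⬝ᵥ p j u) * (q i u γ - q j u γ)) u := by
      intro i γ
      have := (hasDerivAt_pi.1 (hp u hu i)) γ
      simpa [Finset.sum_apply, mul_assoc] using this
    set K : Fin n → Fin n → ℝ :=
      fun i j => Real.exp (-((q i u - q j u) ⬝ᵥ (q i u - q j u)) / (2 * σ ^ 2)) with hK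
    have hD : HasDerivAt F
        (∑ i, (((1 / σ ^ 2) * ∑ j, K i j * (p i u ⬝ᵥ p j u) * (q i u α - q j u α)) * q i u β
          + p i u α * ∑ j, K i j * p j u β
          - ((∑ j, K i j * p j u α) * p i u β
            + q i u α * ((1 / σ ^ 2) * ∑ j, K i j * (p i u ⬝ᵥ p j u) * (q i u β - q j u β))))) u := by
      apply HasDerivAt.fun_sum
      intro i _
      exact (((hpc i α).mul (hqc i β))).sub ((hqc i α).mul (hpc i β))
    have hKsymm : ∀ i j, K i j = K j i := by
      intro i j
      have : (q i u - q j u) ⬝ᵥ (q i u - q j u) = (q j u - q i u) ⬝ᵥ (q j u - q i u) := by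
        rw [show q j u - q i u = -(q i u - q j u) by ring_nf, neg_dotProduct, dotProduct_neg, neg_neg]
      simp only [hK]; rw [this]
    have hzero : (∑ i, (((1 / σ ^ 2) * ∑ j, K i j * (p i u ⬝ᵥ p j u) * (q i u α - q j u α)) * q i u β
          + p i u α * ∑ j, K i j * p j u β
          - ((∑ j, K i j * p j u α) * p i u β
            + q i u α * ((1 / σ ^ 2) * ∑ j, K i j * (p i u ⬝ᵥ p j u) * (q i u β - q j u β))))) = 0 := by
      set E : Fin n → Fin n → ℝ := fun i j =>
        K i j * (p i u α * p j u β - p j u α * p i u β)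
          + (1 / σ ^ 2) * (K i j * (p i u ⬝ᵥ p j u) * (q i u α * q j u β - q j u α * q i u β)) with hE
      have hre : ∀ i : Fin n, (((1 / σ ^ 2) * ∑ j, K i j * (p i u ⬝ᵥ p j u) * (q i u α - q j u α)) * q i u β
          + p i u α * ∑ j, K i j * p j u β
          - ((∑ j, K i j * p j u α) * p i u β
            + q i u α * ((1 / σ ^ 2) * ∑ j, K i j * (p i u ⬝ᵥ p j u) * (q i u β - q j u β)))) = ∑ j, E i j := by
        intro i
        rw [Finset.mul_sum, Finset.mul_sum, Finset.sum_mul, Finset.mul_sum, Finset.sum_mul, Finset.mul_sum]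
        rw [← Finset.sum_add_distrib, ← Finset.sum_add_distrib, ← Finset.sum_sub_distrib]
        exact Finset.sum_congr rfl fun j _ => by simp only [hE]; ring
      rw [Finset.sum_congr rfl fun i _ => hre i]
      have h1 : (∑ i, ∑ j, E i j) = ∑ i, ∑ j, E j i := Finset.sum_comm
      have h2 : (∑ i, ∑ j, E i j) + (∑ i, ∑ j, E j i) = 0 := by
        rw [← Finset.sum_add_distrib]
        rw [show (0:ℝ) = ∑ i : Fin n, (0:ℝ) by simp]
        refine Finset.sum_congr rfl fun i _ => ?_
        rw [← Finset.sum_add_distrib]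
        refine Finset.sum_eq_zero fun j _ => ?_
        have := hKsymm i j
        have hdp : p i u ⬝ᵥ p j u = p j u ⬝ᵥ p i u := dotProduct_comm _ _
        simp only [hE, this, hdp]
        ring
      linarith [h1 ▸ h2]
    exact hzero ▸ hD
  -- constancy on the convex set Ioo a b
  have hconv : Convex ℝ (Set.Ioo a b) := convex_Ioo a b
  have hdiff : DifferentiableOn ℝ F (Set.Ioo a b) :=
    fun u hu => ((key u hu).differentiableAt).differentiableWithinAt
  have hfd : ∀ u ∈ Set.Ioo a b, fderivWithin ℝ F (Set.Ioo a b) u = 0 := by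
    intro u hu
    have h2 : HasFDerivAt F (0 : ℝ →L[ℝ] ℝ) u := by
      have h3 := (key u hu).hasFDerivAt
      have h4 : ContinuousLinearMap.toSpanSingleton ℝ (0:ℝ) = 0 := by
        ext x; simp
      rwa [h4] at h3
    rw [fderivWithin_of_isOpen isOpen_Ioo hu, h2.fderiv]
  exact hconv.is_const_of_fderivWithin_eq_zero hdiff hfd ht hs
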